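/- For all positions i, j ∈ ℤ there exists n ∈ ℕ such that Σ̃(1101001, i) ⊆ f18^n(Σ̃(1101001, j)). -/

import Mathlib

open Filter MeasureTheory

/-- The local rule of ECA 18. -/
def rule18 (a b c : Bool) : Bool := (!a && !b && c) || (a && !b && !c)

/-- The local rule of ECA 90. -/
def rule90 (a _b c : Bool) : Bool := xor a c

/-- ECA 18 acting on configurations. -/
def f18C (x : ℤ → Bool) : ℤ → Bool := fun i => rule18 (x (i - 1)) (x i) (x (i + 1))

/-- ECA 90 acting on configurations. -/
def f90C (x : ℤ → Bool) : ℤ → Bool := fun i => rule90 (x (i - 1)) (x i) (x (i + 1))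

/-- Applying a radius-1 local rule to a finite word (shortens it by 2). -/
def mapWord (R : Bool → Bool → Bool → Bool) (w : List Bool) : List Bool :=
  (List.range (w.length - 2)).map fun i =>
    R (w.getD i false) (w.getD (i + 1) false) (w.getD (i + 2) false)

/-- ECA 18 acting on finite words. -/
def f18W : List Bool → List Bool := mapWord rule18

/-- ECA 90 acting on finite words. -/
def f90W : List Bool → List Bool := mapWord rule90

/-- The kink `1 0^(2k) 1`. -/
def kinkWord (k : ℕ) : List Bool := true :: (List.replicate (2 * k) false ++ [true])

/-- A kink occurs in the word `w` at position `i`. -/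
def kinkAtW (w : List Bool) (i : ℕ) : Prop :=
  ∃ k, (w.drop i).take (2 * k + 2) = kinkWord k

/-- The number of kinks in a finite word: the number of positions where a kink occurs. -/
noncomputable def kinkCount (w : List Bool) : ℕ := {i : ℕ | kinkAtW w i}.ncard

/-- A kink occurs in the configuration `x` at position `i`. -/
def kinkAtC (x : ℤ → Bool) (i : ℤ) : Prop :=
  ∃ k, ∀ j : ℕ, j < 2 * k + 2 → x (i + j) = (kinkWord k).getD j false

/-- The configuration `x` contains exactly `m` kinks: the set of positions where a kink
occurs is finite of cardinality `m` (equivalently, `g_x(n)` tends to `m`). -/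
def configKinks (x : ℤ → Bool) (m : ℕ) : Prop :=
  {i : ℤ | kinkAtC x i}.Finite ∧ {i : ℤ | kinkAtC x i}.ncard = m

/-- Left unstable words: the regular language `(ε+0)(10)^* 11 (0+1)^*`. -/
def leftUnstable (w : List Bool) : Prop :=
  ∃ z t : List Bool, ∃ n : ℕ, (z = [] ∨ z = [false]) ∧
    w = z ++ (List.replicate n [true, false]).flatten ++ [true, true] ++ t

/-- Right unstable words: the regular language `(0+1)^* 11 (01)^* (ε+0)`. -/
def rightUnstable (w : List Bool) : Prop :=
  ∃ z s : List Bool, ∃ n : ℕ, (z = [] ∨ z = [false]) ∧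
    w = s ++ [true, true] ++ (List.replicate n [false, true]).flatten ++ z

/-- Stable words: those that are neither left nor right unstable. -/
def stable (w : List Bool) : Prop := ¬ (leftUnstable w ∨ rightUnstable w)

/-- The finite extension `Σ(w)`: words `a ++ w ++ b` with the same number of kinks as `w`. -/
def extW (w : List Bool) : Set (List Bool) :=
  {u | (∃ a b : List Bool, u = a ++ w ++ b) ∧ kinkCount u = kinkCount w}

/-- The extension `Σ̃(w, p)`: configurations containing `w` at position `p`,
with the same number of kinks as `w`. -/
def extC (w : List Bool) (p : ℤ) : Set (ℤ → Bool) :=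
  {x | (∀ j : ℕ, j < w.length → x (p + j) = w.getD j false) ∧ configKinks x (kinkCount w)}

/-- The cylinder set `[w]_i`. -/
def cyl (w : List Bool) (i : ℤ) : Set (ℤ → Bool) :=
  {x | ∀ j : ℕ, j < w.length → x (i + j) = w.getD j false}

-- ########## auxiliary development ##########

abbrev w7 : List Bool := [true, true, false, true, false, false, true]

lemma kinkWord_length (k : ℕ) : (kinkWord k).length = 2*k+2 := by
  simp [kinkWord]

lemma kW_zero (k : ℕ) : (kinkWord k).getD 0 false = true := rfl

lemma kW_mid (k j : ℕ) (h1 : 1 ≤ j) (h2 : j ≤ 2*k) : (kinkWord k).getD j false = false := by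
  obtain ⟨j', rfl⟩ : ∃ j', j = j' + 1 := ⟨j - 1, by omega⟩
  rw [kinkWord, List.getD_cons_succ, List.getD_eq_getElem?_getD, List.getElem?_append,
    List.length_replicate, if_pos (by omega : j' < 2*k), List.getElem?_replicate,
    if_pos (by omega : j' < 2*k)]
  rfl

lemma kW_last (k : ℕ) : (kinkWord k).getD (2*k+1) false = true := by
  rw [kinkWord, List.getD_cons_succ, List.getD_eq_getElem?_getD,
    List.getElem?_append_right (by simp), List.length_replicate]
  simp

lemma kinkAtW_w7 (i : ℕ) : kinkAtW w7 i ↔ (i = 0 ∨ i = 3) := by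
  constructor
  · rintro ⟨k, hk⟩
    have hlen := congrArg List.length hk
    rw [List.length_take, List.length_drop, kinkWord_length] at hlen
    have hw7 : w7.length = 7 := rfl
    rw [hw7] at hlen
    have hik : 2*k + 2 ≤ 7 - i := by omega
    have hi : i < 6 := by omega
    have hk3 : k < 3 := by omega
    have H : ∀ i' < 6, ∀ k' < 3, ((w7.drop i').take (2*k'+2) = kinkWord k') → (i' = 0 ∨ i' = 3) := by
      decide
    exact H i hi k hk3 hk
  · rintro (rfl | rfl)
    · exact ⟨0, by decide⟩
    · exact ⟨1, by decide⟩

lemma kinkCount_w7 : kinkCount w7 = 2 := by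
  have hset : {i : ℕ | kinkAtW w7 i} = ({0, 3} : Set ℕ) := by
    ext i
    simp [kinkAtW_w7, Set.mem_setOf_eq]
  rw [kinkCount, hset, Set.ncard_pair (by omega : (0:ℕ) ≠ 3)]

def Sst (W : List Bool) (a : ℤ) (x : ℤ → Bool) : Prop :=
  (∀ j : ℕ, j < W.length → x (a + j) = W.getD j false) ∧
  (∀ i : ℤ, i < a → ¬ (2 ∣ (a - i)) → x i = false) ∧
  (∀ i : ℤ, a + W.length - 1 < i → ¬ (2 ∣ (i - (a + W.length - 1))) → x i = false)

section charact
variable (q : ℤ) (x : ℤ → Bool)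

lemma vals_of_win (hwin : ∀ j : ℕ, j < w7.length → x (q + j) = w7.getD j false) :
    x q = true ∧ x (q+1) = true ∧ x (q+2) = false ∧ x (q+3) = true ∧ x (q+4) = false ∧
      x (q+5) = false ∧ x (q+6) = true := by
  have h0 := hwin 0 (by norm_num)
  have h1 := hwin 1 (by norm_num)
  have h2 := hwin 2 (by norm_num)
  have h3 := hwin 3 (by norm_num)
  have h4 := hwin 4 (by norm_num)
  have h5 := hwin 5 (by norm_num)
  have h6 := hwin 6 (by norm_num)
  norm_num at h0 h1 h2 h3 h4 h5 h6
  exact ⟨h0, h1, h2, h3, h4, h5, h6⟩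

lemma kinkAt_q (hwin : ∀ j : ℕ, j < w7.length → x (q + j) = w7.getD j false) :
    kinkAtC x q ∧ kinkAtC x (q+3) := by
  obtain ⟨v0, v1, v2, v3, v4, v5, v6⟩ := vals_of_win q x hwin
  constructor
  · refine ⟨0, fun j hj => ?_⟩
    interval_cases j
    · simpa [kinkWord] using v0
    · simpa [kinkWord] using v1
  · refine ⟨1, fun j hj => ?_⟩
    interval_cases j
    · simpa [kinkWord] using v3
    · have : (q+3) + (1:ℕ) = q + 4 := by push_cast; ring
      rw [this, v4]; rfl
    · have : (q+3) + (2:ℕ) = q + 5 := by push_cast; ring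
      rw [this, v5]; rfl
    · have : (q+3) + (3:ℕ) = q + 6 := by push_cast; ring
      rw [this, v6]; rfl

lemma kinkSet_of_Sst (h : Sst w7 q x) : {i : ℤ | kinkAtC x i} = {q, q+3} := by
  obtain ⟨hwin, hzl, hzr⟩ := h
  obtain ⟨v0, v1, v2, v3, v4, v5, v6⟩ := vals_of_win q x hwin
  have hL7 : (w7.length : ℤ) = 7 := by norm_num
  rw [hL7] at hzr
  have hzr' : ∀ i : ℤ, q + 6 < i → ¬ (2 ∣ (i - (q+6))) → x i = false := fun i h1 h2 =>
    hzr i (by omega) (by omega)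
  ext i
  simp only [Set.mem_setOf_eq, Set.mem_insert_iff, Set.mem_singleton_iff]
  constructor
  · rintro ⟨k, hk⟩
    have F0 : x i = true := by
      have h := hk 0 (by omega)
      rw [kW_zero] at h
      simpa using h
    have F2 : x (i + 2*(k:ℤ) + 1) = true := by
      have h := hk (2*k+1) (by omega)
      rw [kW_last] at h
      have e : i + ((2*k+1 : ℕ):ℤ) = i + 2*(k:ℤ) + 1 := by push_cast; ring
      rwa [e] at h
    have F1 : ∀ m : ℤ, i < m → m < i + 2*(k:ℤ) + 1 → x m = false := by
      intro m hm1 hm2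
      obtain ⟨j, rfl, hj1, hj2⟩ : ∃ j : ℕ, m = i + (j:ℤ) ∧ 1 ≤ j ∧ j ≤ 2*k :=
        ⟨(m - i).toNat, by omega, by omega, by omega⟩
      have h := hk j (by omega)
      rwa [kW_mid k j hj1 hj2] at h
    rcases lt_trichotomy i q with h | h | h
    · exfalso
      by_cases hp : 2 ∣ (q - i)
      · by_cases he : i + 2*(k:ℤ) + 1 < q
        · have := hzl (i + 2*(k:ℤ) + 1) (by omega) (by omega)
          rw [this] at F2; exact Bool.noConfusion F2
        · have hq0 : x q = false := F1 q h (by omega)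
          rw [hq0] at v0; exact Bool.noConfusion v0
      · have := hzl i h hp
        rw [this] at F0; exact Bool.noConfusion F0
    · exact Or.inl h
    · have hcase : i = q+1 ∨ i = q+2 ∨ i = q+3 ∨ i = q+4 ∨ i = q+5 ∨ i = q+6 ∨ q+6 < i := by
        omega
      rcases hcase with rfl | rfl | rfl | rfl | rfl | rfl | hbig
      · exfalso
        rcases Nat.eq_zero_or_pos k with rfl | hk1
        · have e : q+1 + 2*((0:ℕ):ℤ) + 1 = q + 2 := by push_cast; ring
          rw [e] at F2; rw [F2] at v2; exact Bool.noConfusion v2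
        · have := F1 (q+3) (by omega) (by omega)
          rw [this] at v3; exact Bool.noConfusion v3
      · exfalso; rw [F0] at v2; exact Bool.noConfusion v2
      · exact Or.inr rfl
      · exfalso; rw [F0] at v4; exact Bool.noConfusion v4
      · exfalso; rw [F0] at v5; exact Bool.noConfusion v5
      · exfalso
        have := hzr' (q+6 + 2*(k:ℤ) + 1) (by omega) (by omega)
        rw [this] at F2; exact Bool.noConfusion F2
      · exfalso
        by_cases hp : 2 ∣ (i - (q+6))
        · have := hzr' (i + 2*(k:ℤ) + 1) (by omega) (by omega)
          rw [this] at F2; exact Bool.noConfusion F2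
        · have := hzr' i (by omega) hp
          rw [this] at F0; exact Bool.noConfusion F0
  · rintro (h | h)
    · rw [h]; exact (kinkAt_q q x hwin).1
    · rw [h]; exact (kinkAt_q q x hwin).2

lemma configKinks_of_Sst (h : Sst w7 q x) : configKinks x 2 := by
  have hset := kinkSet_of_Sst q x h
  constructor
  · rw [hset]; exact (Set.finite_singleton (q+3)).insert q
  · rw [hset]; exact Set.ncard_pair (by omega)

lemma extC_of_Sst (h : Sst w7 q x) : x ∈ extC w7 q := by
  refine ⟨h.1, ?_⟩
  rw [kinkCount_w7]
  exact configKinks_of_Sst q x h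
end charact

lemma Sst_of_extC (q : ℤ) (x : ℤ → Bool) (hx : x ∈ extC w7 q) : Sst w7 q x := by
  obtain ⟨hwin, hck⟩ := hx
  rw [kinkCount_w7] at hck
  obtain ⟨hfin, hcard⟩ := hck
  obtain ⟨v0, v1, v2, v3, v4, v5, v6⟩ := vals_of_win q x hwin
  obtain ⟨hkq, hkq3⟩ := kinkAt_q q x hwin
  -- the kink set is exactly {q, q+3}
  obtain ⟨α, β, hab, hK⟩ := Set.ncard_eq_two.mp hcard
  have hqK : q ∈ ({α, β} : Set ℤ) := hK ▸ hkq
  have hq3K : (q+3) ∈ ({α, β} : Set ℤ) := hK ▸ hkq3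
  simp only [Set.mem_insert_iff, Set.mem_singleton_iff] at hqK hq3K
  have hpair : ({α, β} : Set ℤ) = {q, q+3} := by
    rcases hqK with h1 | h1 <;> rcases hq3K with h2 | h2
    · exfalso; omega
    · rw [← h1, ← h2]
    · rw [← h1, ← h2]; exact Set.pair_comm (q+3) q
    · exfalso; omega
  have noKink : ∀ m : ℤ, kinkAtC x m → m = q ∨ m = q + 3 := by
    intro m hm
    have : m ∈ {i : ℤ | kinkAtC x i} := hm
    rw [hK, hpair] at this
    simpa using this
  -- left claim
  have claimL : ∀ t : ℕ, x (q - 1 - 2*(t:ℤ)) = false := by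
    intro t
    induction t using Nat.strong_induction_on with
    | _ t IH =>
      cases hxm : x (q - 1 - 2*(t:ℤ)) with
      | false => rfl
      | true =>
        exfalso
        have hex : ∃ n : ℕ, x (q - 1 - 2*(t:ℤ) + 1 + (n:ℤ)) = true := by
          refine ⟨2*t, ?_⟩
          have e : q - 1 - 2*(t:ℤ) + 1 + ((2*t:ℕ):ℤ) = q := by push_cast; ring
          rw [e]; exact v0
        have hn0 := Nat.find_spec hex
        have hmin : ∀ n : ℕ, n < Nat.find hex → x (q - 1 - 2*(t:ℤ) + 1 + (n:ℤ)) = false := by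
          intro n hn
          have h := Nat.find_min hex hn
          cases hval : x (q - 1 - 2*(t:ℤ) + 1 + (n:ℤ)) with
          | false => rfl
          | true => exact absurd hval h
        have hle : Nat.find hex ≤ 2*t := by
          apply Nat.find_min'
          have e : q - 1 - 2*(t:ℤ) + 1 + ((2*t:ℕ):ℤ) = q := by push_cast; ring
          rw [e]; exact v0
        set n0 := Nat.find hex with hn0def
        rcases Nat.even_or_odd n0 with ⟨s, hs⟩ | ⟨s, hs⟩
        · -- even: kink at q - 1 - 2t
          have hkink : kinkAtC x (q - 1 - 2*(t:ℤ)) := by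
            refine ⟨s, fun j hj => ?_⟩
            by_cases hj0 : j = 0
            · subst hj0; rw [kW_zero]; simpa using hxm
            · by_cases hjl : j = 2*s + 1
              · subst hjl; rw [kW_last]
                have e : q - 1 - 2*(t:ℤ) + ((2*s+1 : ℕ):ℤ) = q - 1 - 2*(t:ℤ) + 1 + (n0:ℤ) := by
                  push_cast; omega
                rw [e]; exact hn0
              · rw [kW_mid s j (by omega) (by omega)]
                have e : q - 1 - 2*(t:ℤ) + (j:ℤ) = q - 1 - 2*(t:ℤ) + 1 + ((j-1 : ℕ):ℤ) := by
                  push_cast; omega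
                rw [e]; exact hmin (j-1) (by omega)
          rcases noKink _ hkink with h | h <;> omega
        · -- odd: contradiction with IH
          obtain ⟨t', ht'lt, ht'e⟩ :
              ∃ t' : ℕ, t' < t ∧ q - 1 - 2*(t:ℤ) + 1 + (n0:ℤ) = q - 1 - 2*(t':ℤ) :=
            ⟨t - s - 1, by omega, by push_cast; omega⟩
          rw [ht'e] at hn0
          rw [IH t' ht'lt] at hn0
          exact Bool.noConfusion hn0
  -- right claim
  have claimR : ∀ t : ℕ, x (q + 7 + 2*(t:ℤ)) = false := by
    intro t
    induction t using Nat.strong_induction_on with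
    | _ t IH =>
      cases hxm : x (q + 7 + 2*(t:ℤ)) with
      | false => rfl
      | true =>
        exfalso
        have hex : ∃ n : ℕ, x (q + 7 + 2*(t:ℤ) - 1 - (n:ℤ)) = true := by
          refine ⟨2*t, ?_⟩
          have e : q + 7 + 2*(t:ℤ) - 1 - ((2*t:ℕ):ℤ) = q + 6 := by push_cast; ring
          rw [e]; exact v6
        have hn0 := Nat.find_spec hex
        have hmin : ∀ n : ℕ, n < Nat.find hex → x (q + 7 + 2*(t:ℤ) - 1 - (n:ℤ)) = false := by
          intro n hn
          have h := Nat.find_min hex hn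
          cases hval : x (q + 7 + 2*(t:ℤ) - 1 - (n:ℤ)) with
          | false => rfl
          | true => exact absurd hval h
        have hle : Nat.find hex ≤ 2*t := by
          apply Nat.find_min'
          have e : q + 7 + 2*(t:ℤ) - 1 - ((2*t:ℕ):ℤ) = q + 6 := by push_cast; ring
          rw [e]; exact v6
        set n0 := Nat.find hex with hn0def
        rcases Nat.even_or_odd n0 with ⟨s, hs⟩ | ⟨s, hs⟩
        · -- even: kink at u0 := q + 7 + 2t - 1 - n0
          have hkink : kinkAtC x (q + 7 + 2*(t:ℤ) - 1 - (n0:ℤ)) := by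
            refine ⟨s, fun j hj => ?_⟩
            by_cases hj0 : j = 0
            · subst hj0; rw [kW_zero]; simpa using hn0
            · by_cases hjl : j = 2*s + 1
              · subst hjl; rw [kW_last]
                have e : q + 7 + 2*(t:ℤ) - 1 - (n0:ℤ) + ((2*s+1 : ℕ):ℤ) =
                    q + 7 + 2*(t:ℤ) := by push_cast; omega
                rw [e]; exact hxm
              · rw [kW_mid s j (by omega) (by omega)]
                have e : q + 7 + 2*(t:ℤ) - 1 - (n0:ℤ) + (j:ℤ) =
                    q + 7 + 2*(t:ℤ) - 1 - ((n0 - j : ℕ):ℤ) := by push_cast; omega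
                rw [e]; exact hmin (n0 - j) (by omega)
          rcases noKink _ hkink with h | h <;> omega
        · obtain ⟨t', ht'lt, ht'e⟩ :
              ∃ t' : ℕ, t' < t ∧ q + 7 + 2*(t:ℤ) - 1 - (n0:ℤ) = q + 7 + 2*(t':ℤ) :=
            ⟨t - s - 1, by omega, by push_cast; omega⟩
          rw [ht'e] at hn0
          rw [IH t' ht'lt] at hn0
          exact Bool.noConfusion hn0
  refine ⟨hwin, ?_, ?_⟩
  · intro i hi hp
    obtain ⟨t, rfl⟩ : ∃ t : ℕ, i = q - 1 - 2*(t:ℤ) := ⟨(q - 1 - i).toNat / 2, by omega⟩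
    exact claimL t
  · intro i hi hp
    have hL7 : (w7.length : ℤ) = 7 := by norm_num
    rw [hL7] at hi hp
    obtain ⟨t, rfl⟩ : ∃ t : ℕ, i = q + 7 + 2*(t:ℤ) := ⟨(i - q - 7).toNat / 2, by omega⟩
    exact claimR t

-- ### infrastructure

lemma rule18_mid (a c : Bool) : rule18 a false c = xor a c := by cases a <;> cases c <;> rfl
lemma rule18_sides (b : Bool) : rule18 false b false = false := by cases b <;> rfl
lemma rule18_left (b c : Bool) : rule18 false b c = (!b && c) := by cases b <;> cases c <;> rfl
lemma rule18_right (a b : Bool) : rule18 a b false = (a && !b) := by cases a <;> cases b <;> rfl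

/-- Structure predicate: word `W` at position `a`, zeros at odd distance outside. -/
def lrec (x : ℤ → Bool) (c : ℤ) (s : Bool) : ℕ → Bool
  | 0 => s
  | t+1 => xor (x (c - 1 - 2*(t:ℤ))) (lrec x c s t)

def rrec (x : ℤ → Bool) (d : ℤ) (s : Bool) : ℕ → Bool
  | 0 => s
  | t+1 => xor (x (d + 1 + 2*(t:ℤ))) (rrec x d s t)

/-- The canonical preimage of `x` with prescribed window word `W'` at `[c, c+|W'|-1]`. -/
def bld (x : ℤ → Bool) (W' : List Bool) (c : ℤ) : ℤ → Bool := fun m =>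
  if m < c then
    (if 2 ∣ (c - m) then lrec x c (W'.getD 0 false) ((c - m).toNat / 2) else false)
  else if m ≤ c + W'.length - 1 then W'.getD (m - c).toNat false
  else
    (if 2 ∣ (m - (c + W'.length - 1)) then
      rrec x (c + W'.length - 1) (W'.getD (W'.length - 1) false) ((m - (c + W'.length - 1)).toNat / 2)
     else false)

section bldlemmas
variable (x : ℤ → Bool) (W' : List Bool) (c : ℤ)

lemma bld_win (j : ℕ) (hj : j < W'.length) : bld x W' c (c + j) = W'.getD j false := by
  have h1 : ¬ (c + (j:ℤ) < c) := by omega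
  have h2 : c + (j:ℤ) ≤ c + W'.length - 1 := by omega
  have h3 : (c + (j:ℤ) - c).toNat = j := by omega
  simp only [bld, if_neg h1, if_pos h2, h3]

lemma bld_loff (m : ℤ) (hm : m < c) (h : ¬ 2 ∣ (c - m)) : bld x W' c m = false := by
  simp only [bld, if_pos hm, if_neg h]

lemma bld_lon (hW' : 0 < W'.length) (t : ℕ) :
    bld x W' c (c - 2*t) = lrec x c (W'.getD 0 false) t := by
  cases t with
  | zero =>
      have : c - 2*((0:ℕ):ℤ) = c + ((0:ℕ):ℤ) := by omega
      rw [this, bld_win x W' c 0 hW']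
      rfl
  | succ t =>
      have h1 : c - 2*((t+1:ℕ):ℤ) < c := by push_cast; omega
      have h2 : 2 ∣ (c - (c - 2*((t+1:ℕ):ℤ))) := by push_cast; omega
      have h3 : (c - (c - 2*((t+1:ℕ):ℤ))).toNat / 2 = t + 1 := by push_cast; omega
      simp only [bld, if_pos h1, if_pos h2, h3]

lemma bld_ron (hW' : 0 < W'.length) (t : ℕ) :
    bld x W' c (c + W'.length - 1 + 2*t)
      = rrec x (c + W'.length - 1) (W'.getD (W'.length - 1) false) t := by
  cases t with
  | zero =>
      have h0 : c + (W'.length:ℤ) - 1 + 2*((0:ℕ):ℤ) = c + ((W'.length - 1 : ℕ):ℤ) := by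
        push_cast; omega
      rw [h0, bld_win x W' c (W'.length - 1) (by omega)]
      rfl
  | succ t =>
      have h1 : ¬ (c + (W'.length:ℤ) - 1 + 2*((t+1:ℕ):ℤ) < c) := by push_cast; omega
      have h2 : ¬ (c + (W'.length:ℤ) - 1 + 2*((t+1:ℕ):ℤ) ≤ c + W'.length - 1) := by push_cast; omega
      have h3 : 2 ∣ (c + (W'.length:ℤ) - 1 + 2*((t+1:ℕ):ℤ) - (c + W'.length - 1)) := by push_cast; omega
      have h4 : (c + (W'.length:ℤ) - 1 + 2*((t+1:ℕ):ℤ) - (c + W'.length - 1)).toNat / 2 = t + 1 := by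
        push_cast; omega
      simp only [bld, if_neg h1, if_neg h2, if_pos h3, h4]

lemma bld_roff (m : ℤ) (hm : c + W'.length - 1 < m) (h : ¬ 2 ∣ (m - (c + W'.length - 1))) :
    bld x W' c m = false := by
  have h1 : ¬ (m < c) := by omega
  have h2 : ¬ (m ≤ c + W'.length - 1) := by omega
  simp only [bld, if_neg h1, if_neg h2, if_neg h]

end bldlemmas

lemma f18W_getD (W' : List Bool) (k : ℕ) (hk : k < W'.length - 2) :
    (f18W W').getD k false
      = rule18 (W'.getD k false) (W'.getD (k+1) false) (W'.getD (k+2) false) := by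
  unfold f18W mapWord
  rw [List.getD_eq_getElem?_getD, List.getElem?_map, List.getElem?_range hk]
  rfl

lemma xor_cancel (v u : Bool) : xor (xor v u) u = v := by cases v <;> cases u <;> rfl
lemma xor_cancel' (u v : Bool) : xor u (xor u v) = v := by cases v <;> cases u <;> rfl

theorem stepS (x : ℤ → Bool) (W W' : List Bool) (a : ℤ)
    (hWlen : 2 ≤ W.length)
    (hlen : W'.length = W.length + 2)
    (hmap : f18W W' = W)
    (hL : W'.getD 0 false = true ∨ W'.getD 1 false = false)
    (hR : W'.getD (W'.length - 1) false = true ∨ W'.getD (W'.length - 2) false = false)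
    (hx : Sst W a x) :
    f18C (bld x W' (a - 1)) = x ∧ Sst W' (a - 1) (bld x W' (a - 1)) := by
  obtain ⟨hwin, hzl, hzr⟩ := hx
  set c : ℤ := a - 1 with hc
  have hW'pos : 0 < W'.length := by omega
  have hlenz : (W'.length : ℤ) = (W.length : ℤ) + 2 := by rw [hlen]; push_cast; ring
  set d : ℤ := c + W'.length - 1 with hd
  have hda : d = a + W.length := by omega
  refine ⟨?_, fun j hj => bld_win x W' c j hj, fun i hi hp => bld_loff x W' c i hi hp,
    fun i hi hp => bld_roff x W' c i hi hp⟩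
  · funext i
    show rule18 (bld x W' c (i-1)) (bld x W' c i) (bld x W' c (i+1)) = x i
    rcases lt_trichotomy i c with hi | hi | hi
    · by_cases hpar : 2 ∣ (c - i)
      · -- on-parity left, x i = 0, both neighbors off-parity 0
        have hx0 : x i = false := hzl i (by omega) (by omega)
        have e1 : bld x W' c (i-1) = false := bld_loff x W' c _ (by omega) (by omega)
        have e2 : bld x W' c (i+1) = false := bld_loff x W' c _ (by omega) (by omega)
        rw [e1, e2, rule18_sides, hx0]
      · -- off-parity: recursion position
        obtain ⟨t, ht⟩ : ∃ t : ℕ, i = c - 1 - 2*(t:ℤ) := ⟨((c - 1 - i).toNat / 2), by omega⟩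
        have e0 : bld x W' c i = false := bld_loff x W' c _ hi hpar
        have e1 : bld x W' c (i-1) = lrec x c (W'.getD 0 false) (t+1) := by
          have : i - 1 = c - 2*((t+1:ℕ):ℤ) := by push_cast; omega
          rw [this, bld_lon x W' c hW'pos]
        have e2 : bld x W' c (i+1) = lrec x c (W'.getD 0 false) t := by
          have : i + 1 = c - 2*((t:ℕ):ℤ) := by push_cast; omega
          rw [this, bld_lon x W' c hW'pos]
        rw [e0, e1, e2, rule18_mid]
        show xor (xor (x (c - 1 - 2*(t:ℤ))) _) _ = x i
        rw [xor_cancel, ht]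
    · -- i = c
      have hx0 : x c = false := hzl c (by omega) (by omega)
      have e1 : bld x W' c (c-1) = false := bld_loff x W' c _ (by omega) (by omega)
      have e2 : bld x W' c c = W'.getD 0 false := by
        simpa using bld_win x W' c 0 hW'pos
      have e3 : bld x W' c (c+1) = W'.getD 1 false := by
        have : c + 1 = c + ((1:ℕ):ℤ) := by omega
        rw [this, bld_win x W' c 1 (by omega)]
      rw [hi, hx0, e1, e2, e3, rule18_left]
      rcases hL with h | h <;> rw [h] <;> simp
    · rcases lt_trichotomy i d with hid | hid | hid
      · -- window case
        have hia : a ≤ i := by omega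
        obtain ⟨j, hj⟩ : ∃ j : ℕ, i = a + (j:ℤ) := ⟨(i - a).toNat, by omega⟩
        have hjW : j < W.length := by omega
        have e1 : bld x W' c (i-1) = W'.getD j false := by
          have : i - 1 = c + (j:ℤ) := by omega
          rw [this, bld_win x W' c j (by omega)]
        have e2 : bld x W' c i = W'.getD (j+1) false := by
          have : i = c + ((j+1:ℕ):ℤ) := by push_cast; omega
          rw [this, bld_win x W' c (j+1) (by omega)]
        have e3 : bld x W' c (i+1) = W'.getD (j+2) false := by
          have : i + 1 = c + ((j+2:ℕ):ℤ) := by push_cast; omega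
          rw [this, bld_win x W' c (j+2) (by omega)]
        rw [e1, e2, e3, ← f18W_getD W' j (by omega), hmap, hj, hwin j hjW]
      · -- i = d
        have hx0 : x d = false := hzr d (by omega) (by omega)
        have e1 : bld x W' c (d-1) = W'.getD (W'.length - 2) false := by
          have : d - 1 = c + ((W'.length - 2 : ℕ):ℤ) := by omega
          rw [this, bld_win x W' c (W'.length - 2) (by omega)]
        have e2 : bld x W' c d = W'.getD (W'.length - 1) false := by
          have : d = c + ((W'.length - 1 : ℕ):ℤ) := by omega
          rw [this, bld_win x W' c (W'.length - 1) (by omega)]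
        have e3 : bld x W' c (d+1) = false := bld_roff x W' c _ (by omega) (by omega)
        rw [hid, hx0, e1, e2, e3, rule18_right]
        rcases hR with h | h <;> rw [h] <;> simp
      · by_cases hpar : 2 ∣ (i - d)
        · have hx0 : x i = false := hzr i (by omega) (by omega)
          have e1 : bld x W' c (i-1) = false := bld_roff x W' c _ (by omega) (by omega)
          have e2 : bld x W' c (i+1) = false := bld_roff x W' c _ (by omega) (by omega)
          rw [e1, e2, rule18_sides, hx0]
        · obtain ⟨t, ht⟩ : ∃ t : ℕ, i = d + 1 + 2*(t:ℤ) := ⟨((i - d - 1).toNat / 2), by omega⟩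
          have e0 : bld x W' c i = false := bld_roff x W' c _ hid hpar
          have e1 : bld x W' c (i-1) = rrec x d (W'.getD (W'.length - 1) false) t := by
            have : i - 1 = c + W'.length - 1 + 2*((t:ℕ):ℤ) := by push_cast; omega
            rw [this, bld_ron x W' c hW'pos]
          have e2 : bld x W' c (i+1) = rrec x d (W'.getD (W'.length - 1) false) (t+1) := by
            have : i + 1 = c + W'.length - 1 + 2*((t+1:ℕ):ℤ) := by push_cast; omega
            rw [this, bld_ron x W' c hW'pos]
          rw [e0, e1, e2, rule18_mid]
          show xor _ (xor (x (d + 1 + 2*(t:ℤ))) _) = x i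
          rw [Bool.xor_comm (x (d + 1 + 2*(t:ℤ))), xor_cancel', ht]


-- ### the concrete backward chains

def A1 : List Bool := [true,false,false,true,false,false,false,false,true]
def A2 : List Bool := [true,false,false,false,false,true,true,false,true,false,false]
def A3 : List Bool := [false,false,true,true,false,true,false,false,true,false,false,false,false]
def B2 : List Bool := [true,false,false,false,false,true,false,true,true,false,false]
def B3 : List Bool := [true,false,false,false,false,false,false,true,false,false,true,false,true]
def B4 : List Bool := [true,false,false,false,false,false,false,false,false,true,true,false,false,false,true]
def B5 : List Bool := [false,false,true,false,true,false,true,true,false,true,false,false,true,false,true,false,false]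

lemma Sst_of_A3 (c : ℤ) (x : ℤ → Bool) (h : Sst A3 c x) : Sst w7 (c+2) x := by
  obtain ⟨h1, h2, h3⟩ := h
  have hLA : (A3.length : ℤ) = 13 := by norm_num [A3]
  rw [hLA] at h3
  have hgv : ∀ j : ℕ, j < 7 → A3.getD (j+2) false = w7.getD j false := by decide
  refine ⟨?_, ?_, ?_⟩
  · intro j hj
    have hj7 : j < 7 := hj
    have := h1 (j+2) (by norm_num [A3]; omega)
    rw [hgv j hj7] at this
    have e : c + ((j+2 : ℕ):ℤ) = (c+2) + (j:ℤ) := by push_cast; ring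
    rwa [e] at this
  · intro i hi hp
    rcases (by omega : i < c ∨ i = c ∨ i = c + 1) with h | h | h
    · exact h2 i h (by omega)
    · exfalso; omega
    · have := h1 1 (by norm_num [A3])
      rw [h]
      simpa [A3] using this
  · intro i hi hp
    have hL7 : (w7.length : ℤ) = 7 := by norm_num
    rw [hL7] at hi hp
    rcases (by omega : i = c + 9 ∨ i = c + 11 ∨ c + 12 < i) with h | h | h
    · have := h1 9 (by norm_num [A3])
      rw [h]; simpa [A3] using this
    · have := h1 11 (by norm_num [A3])
      rw [h]; simpa [A3] using this
    · exact h3 i (by omega) (by omega)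

lemma Sst_of_B5 (c : ℤ) (x : ℤ → Bool) (h : Sst B5 c x) : Sst w7 (c+6) x := by
  obtain ⟨h1, h2, h3⟩ := h
  have hLB : (B5.length : ℤ) = 17 := by norm_num [B5]
  rw [hLB] at h3
  have hgv : ∀ j : ℕ, j < 7 → B5.getD (j+6) false = w7.getD j false := by decide
  refine ⟨?_, ?_, ?_⟩
  · intro j hj
    have hj7 : j < 7 := hj
    have := h1 (j+6) (by norm_num [B5]; omega)
    rw [hgv j hj7] at this
    have e : c + ((j+6 : ℕ):ℤ) = (c+6) + (j:ℤ) := by push_cast; ring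
    rwa [e] at this
  · intro i hi hp
    rcases (by omega : i < c ∨ i = c + 1 ∨ i = c + 3 ∨ i = c + 5) with h | h | h | h
    · exact h2 i h (by omega)
    · have := h1 1 (by norm_num [B5]); rw [h]; simpa [B5] using this
    · have := h1 3 (by norm_num [B5]); rw [h]; simpa [B5] using this
    · have := h1 5 (by norm_num [B5]); rw [h]; simpa [B5] using this
  · intro i hi hp
    have hL7 : (w7.length : ℤ) = 7 := by norm_num
    rw [hL7] at hi hp
    rcases (by omega : i = c + 13 ∨ i = c + 15 ∨ c + 16 < i) with h | h | h
    · have := h1 13 (by norm_num [B5]); rw [h]; simpa [B5] using this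
    · have := h1 15 (by norm_num [B5]); rw [h]; simpa [B5] using this
    · exact h3 i (by omega) (by omega)

lemma moveL (p : ℤ) : extC w7 p ⊆ f18C^[3] '' extC w7 (p-1) := by
  intro x hx
  have h0 : Sst w7 p x := Sst_of_extC p x hx
  obtain ⟨e1, S1⟩ := stepS x w7 A1 p (by norm_num) (by norm_num [A1]) (by decide)
    (by decide) (by decide) h0
  obtain ⟨e2, S2⟩ := stepS _ A1 A2 (p-1) (by norm_num [A1]) (by norm_num [A1, A2]) (by decide)
    (by decide) (by decide) S1
  obtain ⟨e3, S3⟩ := stepS _ A2 A3 (p-1-1) (by norm_num [A2]) (by norm_num [A2, A3]) (by decide)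
    (by decide) (by decide) S2
  set z3 := bld (bld (bld x A1 (p-1)) A2 (p-1-1)) A3 (p-1-1-1) with hz3
  have hS : Sst w7 (p-1) z3 := by
    have := Sst_of_A3 (p-1-1-1) _ S3
    rwa [show p-1-1-1+2 = p-1 by ring] at this
  refine ⟨z3, extC_of_Sst _ _ hS, ?_⟩
  rw [show (3:ℕ) = 1+1+1 by rfl, Function.iterate_add_apply, Function.iterate_add_apply]
  simp only [Function.iterate_one]
  rw [e3, e2, e1]

lemma moveR (p : ℤ) : extC w7 p ⊆ f18C^[5] '' extC w7 (p+1) := by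
  intro x hx
  have h0 : Sst w7 p x := Sst_of_extC p x hx
  obtain ⟨e1, S1⟩ := stepS x w7 A1 p (by norm_num) (by norm_num [A1]) (by decide)
    (by decide) (by decide) h0
  obtain ⟨e2, S2⟩ := stepS _ A1 B2 (p-1) (by norm_num [A1]) (by norm_num [A1, B2]) (by decide)
    (by decide) (by decide) S1
  obtain ⟨e3, S3⟩ := stepS _ B2 B3 (p-1-1) (by norm_num [B2]) (by norm_num [B2, B3]) (by decide)
    (by decide) (by decide) S2
  obtain ⟨e4, S4⟩ := stepS _ B3 B4 (p-1-1-1) (by norm_num [B3]) (by norm_num [B3, B4]) (by decide)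
    (by decide) (by decide) S3
  obtain ⟨e5, S5⟩ := stepS _ B4 B5 (p-1-1-1-1) (by norm_num [B4]) (by norm_num [B4, B5]) (by decide)
    (by decide) (by decide) S4
  set z5 := bld (bld (bld (bld (bld x A1 (p-1)) B2 (p-1-1)) B3 (p-1-1-1)) B4 (p-1-1-1-1))
      B5 (p-1-1-1-1-1) with hz5
  have hS : Sst w7 (p+1) z5 := by
    have := Sst_of_B5 (p-1-1-1-1-1) _ S5
    rwa [show p-1-1-1-1-1+6 = p+1 by ring] at this
  refine ⟨z5, extC_of_Sst _ _ hS, ?_⟩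
  rw [show (5:ℕ) = 1+1+1+1+1 by rfl, Function.iterate_add_apply, Function.iterate_add_apply,
    Function.iterate_add_apply, Function.iterate_add_apply]
  simp only [Function.iterate_one]
  rw [e5, e4, e3, e2, e1]

lemma chainL (a : ℕ) (p : ℤ) : extC w7 p ⊆ f18C^[3*a] '' extC w7 (p - a) := by
  induction a generalizing p with
  | zero =>
      intro x hx
      refine ⟨x, ?_, rfl⟩
      simpa using hx
  | succ a IH =>
      intro x hx
      obtain ⟨y, hy, hyx⟩ := IH p hx
      obtain ⟨u, hu, huy⟩ := moveL (p - a) hy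
      refine ⟨u, ?_, ?_⟩
      · have e : p - (a:ℤ) - 1 = p - ((a+1 : ℕ):ℤ) := by push_cast; ring
        rwa [e] at hu
      · rw [show 3*(a+1) = 3*a + 3 by ring, Function.iterate_add_apply, huy, hyx]

lemma chainR (b : ℕ) (p : ℤ) : extC w7 p ⊆ f18C^[5*b] '' extC w7 (p + b) := by
  induction b generalizing p with
  | zero =>
      intro x hx
      refine ⟨x, ?_, rfl⟩
      simpa using hx
  | succ b IH =>
      intro x hx
      obtain ⟨y, hy, hyx⟩ := IH p hx
      obtain ⟨u, hu, huy⟩ := moveR (p + b) hy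
      refine ⟨u, ?_, ?_⟩
      · have e : p + (b:ℤ) + 1 = p + ((b+1 : ℕ):ℤ) := by push_cast; ring
        rwa [e] at hu
      · rw [show 5*(b+1) = 5*b + 5 by ring, Function.iterate_add_apply, huy, hyx]


/-- The word `1101001` can be moved from any position to any other position. -/
theorem move_1101001 (i j : ℤ) :
    ∃ n : ℕ, extC [true, true, false, true, false, false, true] i ⊆
      f18C^[n] '' extC [true, true, false, true, false, false, true] j := by
  refine ⟨3*(i-j).toNat + 5*(j-i).toNat, ?_⟩
  intro x hx
  obtain ⟨y, hy, hyx⟩ := chainL (i-j).toNat i hx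
  obtain ⟨z, hz, hzy⟩ := chainR (j-i).toNat (i - ((i-j).toNat : ℤ)) hy
  have e : i - ((i-j).toNat:ℤ) + ((j-i).toNat:ℤ) = j := by omega
  rw [e] at hz
  exact ⟨z, hz, by rw [Function.iterate_add_apply, hzy, hyx]⟩
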